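/- Let H be a Hilbert space and (H_i)_{i∈I} a family of closed subspaces with orthogonal complements H_i^⊥. The following are equivalent: (1) the product of quotient projections H → ∏_i H/H_i has image contained in the Hilbert direct sum ⊕_{l2,i} H/H_i and is bounded; (2) the natural summation map ⊕_i H_i^⊥ → H extends to a bounded operator ⊕_{l2,i} H_i^⊥ → H; (3) the block-Gram matrix P with blocks P_{ij} equal to the orthogonal projection H_j^⊥ → H_i^⊥ defines a bounded operator on ⊕_{l2,i} H_i^⊥. -/

import Mathlib

open scoped InnerProductSpace

section Aux
set_option linter.unusedSectionVars false
set_option synthInstance.maxHeartbeats 1000000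
set_option maxHeartbeats 2000000

variable {H : Type*} [NormedAddCommGroup H] [InnerProductSpace ℂ H] [CompleteSpace H]
  {ι : Type*} [DecidableEq ι] (Hs : ι → Submodule ℂ H) [∀ i, CompleteSpace (Hs i)]

/-- The submodule of finitely supported elements of the Hilbert sum. -/
noncomputable def Mfin : Submodule ℂ (lp (fun i => ↥(Hs i)ᗮ) 2) where
  carrier := {x | Set.Finite {i | x i ≠ 0}}
  add_mem' := by
    intro a b ha hb
    refine (ha.union hb).subset ?_
    intro i hi
    simp only [Set.mem_setOf_eq, Set.mem_union] at hi ⊢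
    by_contra hc
    push_neg at hc
    apply hi
    simp [lp.coeFn_add, hc.1, hc.2]
  zero_mem' := by
    show Set.Finite _
    convert Set.finite_empty
    ext i
    simp
  smul_mem' := by
    intro c x hx
    refine hx.subset ?_
    intro i hi
    simp only [Set.mem_setOf_eq] at hi ⊢
    intro h0
    exact hi (by simp [lp.coeFn_smul, h0])

theorem Mfin_dense : Dense ((Mfin Hs : Submodule ℂ (lp (fun i => ↥(Hs i)ᗮ) 2)) : Set (lp (fun i => ↥(Hs i)ᗮ) 2)) := by
  intro f
  have hsum := lp.hasSum_single (E := fun i => ↥(Hs i)ᗮ) ENNReal.ofNat_ne_top f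
  refine mem_closure_of_tendsto hsum (Filter.Eventually.of_forall fun s => ?_)
  refine Submodule.sum_mem _ fun j _ => ?_
  show Set.Finite _
  refine (Set.finite_singleton j).subset ?_
  intro i hi
  simp only [Set.mem_setOf_eq] at hi
  by_contra hij
  exact hi (lp.single_apply_ne 2 j _ hij)

theorem single_mem_Mfin (j : ι) (v : ↥(Hs j)ᗮ) : lp.single 2 j v ∈ Mfin Hs := by
  show Set.Finite _
  refine (Set.finite_singleton j).subset ?_
  intro i hi
  simp only [Set.mem_setOf_eq] at hi
  by_contra hij
  exact hi (lp.single_apply_ne 2 j _ hij)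

theorem Mfin_summable (x : Mfin Hs) : Summable (fun i => ((x : lp (fun i => ↥(Hs i)ᗮ) 2) i : H)) := by
  apply summable_of_finite_support
  refine x.2.subset ?_
  intro i hi
  simp only [Function.mem_support, Set.mem_setOf_eq] at hi ⊢
  intro h0
  exact hi (by rw [h0]; rfl)

/-- The summation map on finitely supported elements. -/
noncomputable def S0 : Mfin Hs →ₗ[ℂ] H where
  toFun x := ∑' i, ((x : lp (fun i => ↥(Hs i)ᗮ) 2) i : H)
  map_add' x y := by
    rw [← Summable.tsum_add (Mfin_summable Hs x) (Mfin_summable Hs y)]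
    congr 1
  map_smul' c x := by
    simp only [RingHom.id_apply]
    rw [← Summable.tsum_const_smul c (Mfin_summable Hs x)]
    congr 1

theorem Mfin_sum_single (x : Mfin Hs) :
    ∑ j ∈ x.2.toFinset, lp.single 2 j ((x : lp (fun i => ↥(Hs i)ᗮ) 2) j) =
      (x : lp (fun i => ↥(Hs i)ᗮ) 2) := by
  refine (hasSum_sum_of_ne_finset_zero fun j hj => ?_).unique
    (lp.hasSum_single ENNReal.ofNat_ne_top _)
  have hx : (x : lp (fun i => ↥(Hs i)ᗮ) 2) j = 0 := by
    by_contra h0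
    exact hj (x.2.mem_toFinset.2 h0)
  rw [hx]
  ext k
  by_cases hk : k = j
  · subst hk; simp [lp.single_apply_self]
  · simp [lp.single_apply_ne 2 j _ hk]

theorem S0_eq_sum (x : Mfin Hs) :
    S0 Hs x = ∑ i ∈ x.2.toFinset, ((x : lp (fun i => ↥(Hs i)ᗮ) 2) i : H) := by
  refine tsum_eq_sum fun i hi => ?_
  have hx : (x : lp (fun i => ↥(Hs i)ᗮ) 2) i = 0 := by
    by_contra h0
    exact hi (x.2.mem_toFinset.2 h0)
  rw [hx]; rfl

theorem S0_bound (P : lp (fun i => ↥(Hs i)ᗮ) 2 →L[ℂ] lp (fun i => ↥(Hs i)ᗮ) 2)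
    (hP : ∀ (j : ι) (v : ↥(Hs j)ᗮ) (i : ι),
      P (lp.single 2 j v) i = Submodule.orthogonalProjectionOnto (Hs i)ᗮ (v : H))
    (x : Mfin Hs) : ‖S0 Hs x‖ ≤ Real.sqrt ‖P‖ * ‖x‖ := by
  set s := x.2.toFinset with hs
  have key : ⟪(x : lp (fun i => ↥(Hs i)ᗮ) 2), P x⟫_ℂ = ⟪S0 Hs x, S0 Hs x⟫_ℂ := by
    conv_lhs => rw [← Mfin_sum_single Hs x]
    rw [map_sum, inner_sum, S0_eq_sum, inner_sum]
    refine Finset.sum_congr rfl fun j hj => ?_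
    rw [sum_inner, sum_inner]
    refine Finset.sum_congr rfl fun i hi => ?_
    rw [lp.inner_single_left, hP j _ i,
      Submodule.inner_orthogonalProjectionOnto_eq_of_mem_left (K := (Hs i)ᗮ) _ _]
  have h1 : ‖S0 Hs x‖ * ‖S0 Hs x‖ ≤ ‖P‖ * (‖x‖ * ‖x‖) := by
    calc ‖S0 Hs x‖ * ‖S0 Hs x‖ = RCLike.re ⟪S0 Hs x, S0 Hs x⟫_ℂ :=
          (inner_self_eq_norm_mul_norm _).symm
      _ = RCLike.re ⟪(x : lp (fun i => ↥(Hs i)ᗮ) 2), P x⟫_ℂ := by rw [key]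
      _ ≤ ‖⟪(x : lp (fun i => ↥(Hs i)ᗮ) 2), P x⟫_ℂ‖ := RCLike.re_le_norm _
      _ ≤ ‖(x : lp (fun i => ↥(Hs i)ᗮ) 2)‖ * ‖P x‖ := norm_inner_le_norm _ _
      _ ≤ ‖(x : lp (fun i => ↥(Hs i)ᗮ) 2)‖ * (‖P‖ * ‖(x : lp (fun i => ↥(Hs i)ᗮ) 2)‖) := by
          gcongr
          exact P.le_opNorm _
      _ = ‖P‖ * (‖x‖ * ‖x‖) := by rw [Submodule.norm_coe]; ring
  calc ‖S0 Hs x‖ = Real.sqrt (‖S0 Hs x‖ * ‖S0 Hs x‖) := (Real.sqrt_mul_self (norm_nonneg _)).symm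
    _ ≤ Real.sqrt (‖P‖ * (‖x‖ * ‖x‖)) := Real.sqrt_le_sqrt h1
    _ = Real.sqrt ‖P‖ * ‖x‖ := by
        rw [Real.sqrt_mul (norm_nonneg P), Real.sqrt_mul_self (norm_nonneg _)]

theorem exists_S (P : lp (fun i => ↥(Hs i)ᗮ) 2 →L[ℂ] lp (fun i => ↥(Hs i)ᗮ) 2)
    (hP : ∀ (j : ι) (v : ↥(Hs j)ᗮ) (i : ι),
      P (lp.single 2 j v) i = Submodule.orthogonalProjectionOnto (Hs i)ᗮ (v : H)) :
    ∃ S : lp (fun i => ↥(Hs i)ᗮ) 2 →L[ℂ] H,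
      ∀ (i : ι) (v : ↥(Hs i)ᗮ), S (lp.single 2 i v) = (v : H) := by
  set S0c : Mfin Hs →L[ℂ] H :=
    LinearMap.mkContinuous (S0 Hs) (Real.sqrt ‖P‖) (S0_bound Hs P hP) with hS0c
  have h_dense : DenseRange ((Mfin Hs).subtypeL : Mfin Hs →L[ℂ] lp (fun i => ↥(Hs i)ᗮ) 2) :=
    (Mfin_dense Hs).denseRange_val
  have h_e : IsUniformInducing ((Mfin Hs).subtypeL : Mfin Hs →L[ℂ] lp (fun i => ↥(Hs i)ᗮ) 2) :=
    isometry_subtype_coe.isUniformInducing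
  refine ⟨S0c.extend (Mfin Hs).subtypeL, fun j v => ?_⟩
  have hmem : lp.single 2 j v ∈ Mfin Hs := single_mem_Mfin Hs j v
  have h1 : lp.single 2 j v =
      ((Mfin Hs).subtypeL : Mfin Hs →L[ℂ] lp (fun i => ↥(Hs i)ᗮ) 2) ⟨lp.single 2 j v, hmem⟩ := rfl
  rw [h1, ContinuousLinearMap.extend_eq (h_dense := h_dense) (h_e := h_e)]
  show S0 Hs ⟨lp.single 2 j v, hmem⟩ = (v : H)
  show (∑' i, ((lp.single 2 j v : lp (fun i => ↥(Hs i)ᗮ) 2) i : H)) = (v : H)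
  rw [tsum_eq_single j]
  · rw [lp.single_apply_self]
  · intro i hij
    rw [lp.single_apply_ne 2 j _ hij]; rfl

theorem aux21 (S : lp (fun i => ↥(Hs i)ᗮ) 2 →L[ℂ] H)
    (hS : ∀ (i : ι) (v : ↥(Hs i)ᗮ), S (lp.single 2 i v) = (v : H)) (h : H) (i : ι) :
    (ContinuousLinearMap.adjoint S) h i = Submodule.orthogonalProjectionOnto (Hs i)ᗮ h := by
  refine ext_inner_left ℂ fun v => ?_
  calc ⟪v, (ContinuousLinearMap.adjoint S) h i⟫_ℂ
      = ⟪lp.single 2 i v, (ContinuousLinearMap.adjoint S) h⟫_ℂ := (lp.inner_single_left (𝕜 := ℂ) i v ((ContinuousLinearMap.adjoint S) h)).symm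
    _ = ⟪S (lp.single 2 i v), h⟫_ℂ := ContinuousLinearMap.adjoint_inner_right _ _ _
    _ = ⟪(v : H), h⟫_ℂ := by rw [hS]
    _ = ⟪v, Submodule.orthogonalProjectionOnto (Hs i)ᗮ h⟫_ℂ :=
      (Submodule.inner_orthogonalProjectionOnto_eq_of_mem_left (K := (Hs i)ᗮ) v h).symm

theorem aux12 (T : H →L[ℂ] lp (fun i => ↥(Hs i)ᗮ) 2)
    (hT : ∀ (h : H) (i : ι), T h i = Submodule.orthogonalProjectionOnto (Hs i)ᗮ h)
    (i : ι) (v : ↥(Hs i)ᗮ) :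
    (ContinuousLinearMap.adjoint T) (lp.single 2 i v) = (v : H) := by
  refine ext_inner_right ℂ fun h => ?_
  rw [ContinuousLinearMap.adjoint_inner_left, lp.inner_single_left, hT]
  exact Submodule.inner_orthogonalProjectionOnto_eq_of_mem_left (K := (Hs i)ᗮ) v h

end Aux

/-- For a family of closed subspaces `Hs i` of a Hilbert space `H` (identifying `H / Hs i`
with the orthogonal complement `(Hs i)ᗮ`), the following are equivalent:
(1) the product of the quotient projections maps `H` boundedly into the Hilbert direct sum
`⊕_{ℓ²} (Hs i)ᗮ`; (2) the summation map `⊕ (Hs i)ᗮ → H` extends to a bounded operator on the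
Hilbert direct sum; (3) the block-Gram matrix of orthogonal projections
`(Hs j)ᗮ → (Hs i)ᗮ` defines a bounded operator on the Hilbert direct sum. -/
theorem stmt10 {H : Type*} [NormedAddCommGroup H] [InnerProductSpace ℂ H] [CompleteSpace H]
    {ι : Type*} [DecidableEq ι] (Hs : ι → Submodule ℂ H) [∀ i, CompleteSpace (Hs i)] :
    ((∃ T : H →L[ℂ] lp (fun i => ↥(Hs i)ᗮ) 2,
        ∀ (h : H) (i : ι), T h i = Submodule.orthogonalProjectionOnto (Hs i)ᗮ h) ↔
      (∃ S : lp (fun i => ↥(Hs i)ᗮ) 2 →L[ℂ] H,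
        ∀ (i : ι) (v : ↥(Hs i)ᗮ), S (lp.single 2 i v) = (v : H))) ∧
    ((∃ S : lp (fun i => ↥(Hs i)ᗮ) 2 →L[ℂ] H,
        ∀ (i : ι) (v : ↥(Hs i)ᗮ), S (lp.single 2 i v) = (v : H)) ↔
      (∃ P : lp (fun i => ↥(Hs i)ᗮ) 2 →L[ℂ] lp (fun i => ↥(Hs i)ᗮ) 2,
        ∀ (j : ι) (v : ↥(Hs j)ᗮ) (i : ι),
          P (lp.single 2 j v) i = Submodule.orthogonalProjectionOnto (Hs i)ᗮ (v : H))) := by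
  refine ⟨⟨?_, ?_⟩, ⟨?_, ?_⟩⟩
  · rintro ⟨T, hT⟩
    exact ⟨ContinuousLinearMap.adjoint T, aux12 Hs T hT⟩
  · rintro ⟨S, hS⟩
    exact ⟨ContinuousLinearMap.adjoint S, aux21 Hs S hS⟩
  · rintro ⟨S, hS⟩
    refine ⟨(ContinuousLinearMap.adjoint S).comp S, fun j v i => ?_⟩
    rw [ContinuousLinearMap.comp_apply, hS, aux21 Hs S hS]
  · rintro ⟨P, hP⟩
    exact exists_S Hs P hP
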